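/- Under the assumptions ‖A‖ ≤ 1 and σ(B) ⊂ {z : |z| > 1}, the Sylvester operator S_{A,B}(X) = AX − XB on B(H, H') is invertible (bijective). -/

import Mathlib

open ContinuousLinearMap Filter

theorem sylvester_operator_bijective
    {H H' : Type*} [NormedAddCommGroup H] [InnerProductSpace ℂ H] [CompleteSpace H]
    [NormedAddCommGroup H'] [InnerProductSpace ℂ H'] [CompleteSpace H']
    (A : H' →L[ℂ] H') (hA : ‖A‖ ≤ 1)
    (B : H →L[ℂ] H)
    (hB : spectrum ℂ B ⊆ {z : ℂ | 1 < ‖z‖}) :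
    Function.Bijective (fun X : H →L[ℂ] H' => A.comp X - X.comp B) := by
  classical
  -- B is invertible
  have hB0 : (0 : ℂ) ∉ spectrum ℂ B := by
    intro h
    exact absurd (hB h) (by simp)
  have hBu : IsUnit B := spectrum.zero_notMem_iff ℂ |>.mp hB0
  set u : (H →L[ℂ] H)ˣ := hBu.unit with hu
  set C : H →L[ℂ] H := ↑u⁻¹ with hCdef
  have huval : (u : H →L[ℂ] H) = B := hBu.unit_spec
  have hCB : C.comp B = ContinuousLinearMap.id ℂ H := by
    have h : (↑u⁻¹ * ↑u : H →L[ℂ] H) = 1 := u.inv_mul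
    rw [huval, mul_def] at h
    rw [hCdef, h, one_def]
  have hBC : B.comp C = ContinuousLinearMap.id ℂ H := by
    have h : (↑u * ↑u⁻¹ : H →L[ℂ] H) = 1 := u.mul_inv
    rw [huval, mul_def] at h
    rw [hCdef, h, one_def]
  -- every spectral value of C has modulus < 1
  have hCun : ∀ z ∈ spectrum ℂ C, ‖z‖₊ < 1 := by
    intro z hz
    have hmem : z ∈ (spectrum ℂ (↑u : H →L[ℂ] H))⁻¹ := by
      rw [spectrum.map_inv u]; exact hz
    have hz' : z⁻¹ ∈ spectrum ℂ B := by
      rw [← huval]; exact Set.mem_inv.mp hmem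
    have h1 : 1 < ‖z⁻¹‖ := hB hz'
    rw [norm_inv] at h1
    have habs : ‖z‖ < 1 := by
      rcases eq_or_ne z 0 with rfl | hz0
      · simp
      · have hpos : 0 < ‖z‖ := norm_pos_iff.mpr hz0
        exact (one_lt_inv_iff₀.mp h1).2
    rw [← NNReal.coe_lt_coe]
    simpa using habs
  -- spectral radius of C is < 1
  have hRC : spectralRadius ℂ C < 1 := by
    rcases (spectrum ℂ C).eq_empty_or_nonempty with he | hne
    · rw [spectralRadius, he]
      simp
    · have := spectrum.spectralRadius_lt_of_forall_lt_of_nonempty hne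
        (r := 1) hCun
      simpa using this
  -- the operator T : X ↦ A ∘ X ∘ C
  set T : (H →L[ℂ] H') →L[ℂ] (H →L[ℂ] H') :=
    ((ContinuousLinearMap.compL ℂ H H' H') A).comp
      (((ContinuousLinearMap.compL ℂ H H H').flip) C) with hTdef
  have hTapp : ∀ X : H →L[ℂ] H', T X = A.comp (X.comp C) := fun X => rfl
  have hTpow : ∀ (n : ℕ) (X : H →L[ℂ] H'),
      (T ^ n) X = (A ^ n).comp (X.comp (C ^ n)) := by
    intro n
    induction n with
    | zero => intro X; simp [one_def]
    | succ n ih =>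
      intro X
      rw [pow_succ, ContinuousLinearMap.mul_apply, hTapp, ih]
      ext x
      simp [pow_succ, ContinuousLinearMap.mul_apply]
      have hcc : C ((C ^ n) x) = (C ^ n) (C x) := by
        rw [← ContinuousLinearMap.mul_apply, ← ContinuousLinearMap.mul_apply,
          ← pow_succ' C n, ← pow_succ C n]
      rw [← Function.iterate_succ_apply' (⇑C) n x, Function.iterate_succ_apply]
  have hTnorm : ∀ n : ℕ, 1 ≤ n → ‖T ^ n‖₊ ≤ ‖C ^ n‖₊ := by
    intro n hn
    rw [← NNReal.coe_le_coe]
    refine ContinuousLinearMap.opNorm_le_bound _ (norm_nonneg _) fun X => ?_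
    rw [hTpow n X]
    calc ‖(A ^ n).comp (X.comp (C ^ n))‖ ≤ ‖A ^ n‖ * ‖X.comp (C ^ n)‖ :=
          ContinuousLinearMap.opNorm_comp_le _ _
      _ ≤ 1 * ‖X.comp (C ^ n)‖ := by
          gcongr
          calc ‖A ^ n‖ ≤ ‖A‖ ^ n := norm_pow_le' A hn
            _ ≤ 1 := pow_le_one₀ (norm_nonneg A) hA
      _ = ‖X.comp (C ^ n)‖ := one_mul _
      _ ≤ ‖X‖ * ‖C ^ n‖ := ContinuousLinearMap.opNorm_comp_le _ _
      _ = ‖C ^ n‖ * ‖X‖ := mul_comm _ _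
  -- spectral radius of T is < 1
  have hRT : spectralRadius ℂ T < 1 := by
    have h1 : spectralRadius ℂ T ≤
        atTop.liminf fun n : ℕ => (‖T ^ n‖₊ : ENNReal) ^ (1 / n : ℝ) :=
      spectrum.spectralRadius_le_liminf_pow_nnnorm_pow_one_div ℂ T
    have h2 : (atTop.liminf fun n : ℕ => (‖T ^ n‖₊ : ENNReal) ^ (1 / n : ℝ)) ≤
        atTop.liminf fun n : ℕ => (‖C ^ n‖₊ : ENNReal) ^ (1 / n : ℝ) := by
      refine liminf_le_liminf ?_
      filter_upwards [eventually_ge_atTop 1] with n hn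
      have := hTnorm n hn
      exact ENNReal.rpow_le_rpow (by exact_mod_cast this) (by positivity)
    have h3 : (atTop.liminf fun n : ℕ => (‖C ^ n‖₊ : ENNReal) ^ (1 / n : ℝ)) =
        spectralRadius ℂ C :=
      (spectrum.pow_nnnorm_pow_one_div_tendsto_nhds_spectralRadius C).liminf_eq
    exact lt_of_le_of_lt (h1.trans (h2.trans_eq h3)) hRC
  -- 1 - T is a unit
  have hone : (1 : ℂ) ∉ spectrum ℂ T := by
    intro h
    have hle : (‖(1 : ℂ)‖₊ : ENNReal) ≤ spectralRadius ℂ T :=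
      le_iSup₂ (f := fun k (_ : k ∈ spectrum ℂ T) => (‖k‖₊ : ENNReal)) 1 h
    simp only [nnnorm_one, ENNReal.coe_one] at hle
    exact absurd (hle.trans_lt hRT) (lt_irrefl 1)
  have hUnit : IsUnit ((1 : (H →L[ℂ] H') →L[ℂ] (H →L[ℂ] H')) - T) := by
    have := spectrum.notMem_iff.mp hone
    simpa using this
  set v : ((H →L[ℂ] H') →L[ℂ] (H →L[ℂ] H'))ˣ := hUnit.unit with hv
  have hvval : (v : (H →L[ℂ] H') →L[ℂ] (H →L[ℂ] H')) = 1 - T := hUnit.unit_spec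
  -- bijectivity of the three factors
  have hbij1 : Function.Bijective
      ⇑((1 : (H →L[ℂ] H') →L[ℂ] (H →L[ℂ] H')) - T) := by
    rw [← hvval]
    refine Function.bijective_iff_has_inverse.mpr
      ⟨⇑(↑v⁻¹ : (H →L[ℂ] H') →L[ℂ] (H →L[ℂ] H')), fun X => ?_, fun X => ?_⟩
    · rw [← ContinuousLinearMap.mul_apply, v.inv_mul, ContinuousLinearMap.one_apply]
    · rw [← ContinuousLinearMap.mul_apply, v.mul_inv, ContinuousLinearMap.one_apply]
  have hbij2 : Function.Bijective (fun Y : H →L[ℂ] H' => Y.comp B) := by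
    refine Function.bijective_iff_has_inverse.mpr
      ⟨fun Y => Y.comp C, fun Y => ?_, fun Y => ?_⟩
    · show (Y.comp B).comp C = Y
      rw [ContinuousLinearMap.comp_assoc, hBC, ContinuousLinearMap.comp_id]
    · show (Y.comp C).comp B = Y
      rw [ContinuousLinearMap.comp_assoc, hCB, ContinuousLinearMap.comp_id]
  have hbij3 : Function.Bijective (fun Y : H →L[ℂ] H' => -Y) :=
    neg_involutive.bijective
  have key : (fun X : H →L[ℂ] H' => A.comp X - X.comp B) =
      (fun Y : H →L[ℂ] H' => -Y) ∘ (fun Y : H →L[ℂ] H' => Y.comp B) ∘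
        ⇑((1 : (H →L[ℂ] H') →L[ℂ] (H →L[ℂ] H')) - T) := by
    funext X
    simp only [Function.comp_apply, ContinuousLinearMap.sub_apply, ContinuousLinearMap.one_apply, hTapp]
    rw [sub_comp, ContinuousLinearMap.comp_assoc, ContinuousLinearMap.comp_assoc,
      hCB, ContinuousLinearMap.comp_id, neg_sub]
  rw [key]
  exact hbij3.comp (hbij2.comp hbij1)
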